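/- Let n be an odd integer ≥ 1, let A be a subspace of Fin n → ℝ of odd dimension, let B := Aᗮ be its orthogonal complement for the standard inner product, and let b := dim B, assumed even and positive. Let f : Fin b → (Fin n → ℝ) be an orthonormal basis of B and set z_B := ∏ i, ι(f i) ∈ CliffordAlgebra Q (the product taken in increasing index order). Let g ∈ Spin(n), suppose σ : B →ₗ[ℝ] B is a linear map satisfying ι(σ(w)) = g·ι(w)·g⁻¹ for all w ∈ B, and suppose g·ι(v)·g⁻¹ lies in ι(A) for all v ∈ A. Set κ := det σ. Then z_B·g = κ • (g·z_B) in CliffordAlgebra Q (equivalently, since z_B is invertible, z_B·g·z_B⁻¹ = κ • g). -/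

import Mathlib

/-- Move an element anticommuting with every entry past a product (with continuation). -/
lemma aux_move {A : Type*} [Ring A] {ι : Type*} (x : ι → A) (y : A) :
    ∀ (l : List ι), (∀ i ∈ l, y * x i = -(x i * y)) → ∀ w : A,
      y * ((l.map x).prod * w) = ((-1 : ℤ) ^ l.length) • ((l.map x).prod * (y * w)) := by
  intro l
  induction l with
  | nil => intro _ w; simp
  | cons a t ih =>
    intro h w
    have ha := h a (List.mem_cons_self)
    have ht := fun i hi => h i (List.mem_cons_of_mem a hi)
    simp only [List.map_cons, List.prod_cons, List.length_cons, mul_assoc]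
    calc y * (x a * ((t.map x).prod * w))
        = (y * x a) * ((t.map x).prod * w) := by rw [mul_assoc]
      _ = -(x a * (y * ((t.map x).prod * w))) := by rw [ha, neg_mul, mul_assoc]
      _ = -(x a * (((-1 : ℤ) ^ t.length) • ((t.map x).prod * (y * w)))) := by
          rw [ih ht w]
      _ = ((-1 : ℤ) ^ (t.length + 1)) • (x a * ((t.map x).prod * (y * w))) := by
          rw [mul_smul_comm, pow_succ, mul_neg_one, neg_smul]

lemma aux_swap_shape {A : Type*} [Ring A] {ι : Type*} [DecidableEq ι] (x : ι → A)
    (hx : ∀ i j, i ≠ j → x i * x j = -(x j * x i)) (a b : ι) (hab : a ≠ b)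
    (s u v : List ι) (hs : ∀ i ∈ s, i ≠ a ∧ i ≠ b) (hu : ∀ i ∈ u, i ≠ a ∧ i ≠ b)
    (hv : ∀ i ∈ v, i ≠ a ∧ i ≠ b) :
    ((s ++ a :: u ++ b :: v).map (x ∘ Equiv.swap a b)).prod
      = -((s ++ a :: u ++ b :: v).map x).prod := by
  have hmap : ∀ (l : List ι), (∀ i ∈ l, i ≠ a ∧ i ≠ b) →
      l.map (x ∘ Equiv.swap a b) = l.map x := by
    intro l hl
    refine List.map_congr_left fun i hi => ?_
    simp [Equiv.swap_apply_of_ne_of_ne (hl i hi).1 (hl i hi).2]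
  have hswapa : (x ∘ Equiv.swap a b) a = x b := by simp
  have hswapb : (x ∘ Equiv.swap a b) b = x a := by simp
  simp only [List.map_append, List.map_cons, List.prod_append, List.prod_cons,
    hmap s hs, hmap u hu, hmap v hv, hswapa, hswapb, mul_assoc]
  have h1 := aux_move x (x b) u (fun i hi => hx b i (fun h => ((hu i hi).2 h.symm)))
  have h2 := aux_move x (x a) u (fun i hi => hx a i (fun h => ((hu i hi).1 h.symm)))
  have h3 : x b * x a = -(x a * x b) := hx b a (Ne.symm hab)
  have hmid : x b * ((u.map x).prod * (x a * (v.map x).prod))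
      = -(x a * ((u.map x).prod * (x b * (v.map x).prod))) := by
    have h4 : ∀ V : A, x b * (x a * V) = -(x a * (x b * V)) := by
      intro V; rw [← mul_assoc, h3, neg_mul, mul_assoc]
    rw [h1 (x a * (v.map x).prod), h2 (x b * (v.map x).prod), h4, mul_neg, smul_neg]
  rw [hmid, mul_neg]

lemma aux_nodup_facts {ι : Type*} {s u v : List ι} {c d : ι}
    (h : (s ++ c :: u ++ d :: v).Nodup) :
    (∀ i ∈ s, i ≠ c ∧ i ≠ d) ∧ (∀ i ∈ u, i ≠ c ∧ i ≠ d) ∧ (∀ i ∈ v, i ≠ c ∧ i ≠ d) := by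
  have h' : (s ++ c :: (u ++ d :: v)).Nodup := by simpa using h
  obtain ⟨hs, hrest, hdisj⟩ := List.nodup_append'.mp h'
  obtain ⟨hcmem, hrest2⟩ := List.nodup_cons.mp hrest
  obtain ⟨hu, hdv, hdisj2⟩ := List.nodup_append'.mp hrest2
  obtain ⟨hdmem, hv⟩ := List.nodup_cons.mp hdv
  refine ⟨fun i hi => ⟨?_, ?_⟩, fun i hi => ⟨?_, ?_⟩, fun i hi => ⟨?_, ?_⟩⟩
  · rintro rfl; exact hdisj hi (List.mem_cons_self)
  · rintro rfl
    exact hdisj hi (List.mem_cons_of_mem _ (List.mem_append.2 (Or.inr (List.mem_cons_self))))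
  · rintro rfl; exact hcmem (List.mem_append.2 (Or.inl hi))
  · rintro rfl; exact hdisj2 hi (List.mem_cons_self)
  · rintro rfl; exact hcmem (List.mem_append.2 (Or.inr (List.mem_cons_of_mem _ hi)))
  · rintro rfl; exact hdmem hi

/-- Swapping two values in the product over a nodup list flips the sign. -/
lemma aux_swap {A : Type*} [Ring A] {ι : Type*} [DecidableEq ι] (x : ι → A)
    (hx : ∀ i j, i ≠ j → x i * x j = -(x j * x i)) (a b : ι) (hab : a ≠ b)
    (l : List ι) (hnd : l.Nodup) (ha : a ∈ l) (hb : b ∈ l) :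
    (l.map (x ∘ Equiv.swap a b)).prod = -(l.map x).prod := by
  obtain ⟨s, t, rfl⟩ := List.append_of_mem ha
  have hb' : b ∈ s ∨ b ∈ t := by
    rcases List.mem_append.1 hb with h | h
    · exact Or.inl h
    · rcases List.mem_cons.1 h with h | h
      · exact absurd h.symm hab
      · exact Or.inr h
  rcases hb' with hbs | hbt
  · obtain ⟨s₁, s₂, rfl⟩ := List.append_of_mem hbs
    have hshape : (s₁ ++ b :: s₂) ++ a :: t = s₁ ++ b :: s₂ ++ a :: t := by simp
    rw [hshape] at hnd ⊢
    obtain ⟨h1, h2, h3⟩ := aux_nodup_facts hnd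
    rw [Equiv.swap_comm a b]
    exact aux_swap_shape x hx b a (Ne.symm hab) s₁ s₂ t h1 h2 h3
  · obtain ⟨t₁, t₂, rfl⟩ := List.append_of_mem hbt
    have hshape : s ++ a :: (t₁ ++ b :: t₂) = s ++ a :: t₁ ++ b :: t₂ := by simp
    rw [hshape] at hnd ⊢
    obtain ⟨h1, h2, h3⟩ := aux_nodup_facts hnd
    exact aux_swap_shape x hx a b hab s t₁ t₂ h1 h2 h3

/-- Product over a permuted anticommuting family picks up the sign of the permutation. -/
lemma aux_perm {A : Type*} [Ring A] {k : ℕ} (π : Equiv.Perm (Fin k)) :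
    ∀ x : Fin k → A, (∀ i j, i ≠ j → x i * x j = -(x j * x i)) →
      ((List.finRange k).map (x ∘ π)).prod
        = ((Equiv.Perm.sign π : ℤ)) • ((List.finRange k).map x).prod := by
  refine Equiv.Perm.swap_induction_on π (fun x hx => by simp) ?_
  intro f a b hab ih x hx
  have hcomp : x ∘ (Equiv.swap a b * f) = (x ∘ Equiv.swap a b) ∘ f := rfl
  have hy : ∀ i j, i ≠ j →
      (x ∘ Equiv.swap a b) i * (x ∘ Equiv.swap a b) j
        = -((x ∘ Equiv.swap a b) j * (x ∘ Equiv.swap a b) i) := by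
    intro i j hij
    exact hx _ _ (fun h => hij (Equiv.injective _ h))
  rw [hcomp, ih _ hy,
    aux_swap x hx a b hab (List.finRange k) (List.nodup_finRange k)
      (List.mem_finRange a) (List.mem_finRange b)]
  rw [Equiv.Perm.sign_mul, Equiv.Perm.sign_swap hab]
  simp [smul_neg]

lemma aux_conj {A : Type*} [Monoid A] {ι : Type*} (g h : A) (hgh : g * h = 1)
    (hhg : h * g = 1) : ∀ (l : List ι) (x : ι → A),
      g * (l.map x).prod * h = (l.map (fun i => g * x i * h)).prod := by
  intro l
  induction l with
  | nil => intro x; simpa using hgh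
  | cons a t ih =>
    intro x
    simp only [List.map_cons, List.prod_cons]
    calc g * (x a * (t.map x).prod) * h
        = (g * x a * h) * (g * (t.map x).prod * h) := by
          simp only [mul_assoc]
          rw [← mul_assoc h g, hhg, one_mul]
      _ = (g * x a * h) * (t.map (fun i => g * x i * h)).prod := by rw [ih]

/-- The square of an ordered product of anticommuting square-one elements is `±1`. -/
lemma aux_sq {A : Type*} [Ring A] : ∀ (k : ℕ) (x : Fin k → A),
    (∀ i j, i ≠ j → x i * x j = -(x j * x i)) → (∀ i, x i * x i = 1) →
    ((List.finRange k).map x).prod * ((List.finRange k).map x).prod = 1 ∨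
      ((List.finRange k).map x).prod * ((List.finRange k).map x).prod = -1 := by
  intro k
  induction k with
  | zero => intro x _ _; left; simp
  | succ m ih =>
    intro x hac hsq
    have hrw : (List.finRange (m + 1)).map x
        = x 0 :: (List.finRange m).map (x ∘ Fin.succ) := by
      rw [List.finRange_succ, List.map_cons, List.map_map]
    set Q := ((List.finRange m).map (x ∘ Fin.succ)).prod with hQ
    have hmove := aux_move (x ∘ Fin.succ) (x 0) (List.finRange m)
      (fun i _ => hac 0 i.succ (Ne.symm (Fin.succ_ne_zero i))) (x 0 * Q)
    rw [List.length_finRange, ← hQ] at hmove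
    have key : (x 0 * Q) * (x 0 * Q)
        = ((-1 : ℤ) ^ m) • (Q * Q) := by
      calc (x 0 * Q) * (x 0 * Q) = x 0 * (Q * (x 0 * Q)) := by rw [mul_assoc]
        _ = ((-1 : ℤ) ^ m) • (Q * (x 0 * (x 0 * Q))) := hmove
        _ = ((-1 : ℤ) ^ m) • (Q * Q) := by rw [← mul_assoc (x 0), hsq 0, one_mul]
    have hQQ := ih (x ∘ Fin.succ)
      (fun i j hij => hac i.succ j.succ (fun h => hij (Fin.succ_injective m h)))
      (fun i => hsq i.succ)
    rw [hrw, List.prod_cons, key]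
    rcases Nat.even_or_odd m with hm | hm
    · rw [hm.neg_one_pow]
      rcases hQQ with h | h
      · left; rw [h]; simp
      · right; rw [h]; simp
    · rw [hm.neg_one_pow]
      rcases hQQ with h | h
      · right; rw [h]; simp
      · left; rw [h]; simp

/-- A top-degree alternating map composed with an endomorphism scales by the determinant. -/
lemma aux_alt {𝕜 : Type*} [Field 𝕜] {V W : Type*} [AddCommGroup V] [Module 𝕜 V]
    [AddCommGroup W] [Module 𝕜 W] {ι : Type*} [Fintype ι] [DecidableEq ι]
    (e : Module.Basis ι 𝕜 V) (G : V [⋀^ι]→ₗ[𝕜] W) (σ : V →ₗ[𝕜] V) :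
    G (fun i => σ (e i)) = (LinearMap.det σ) • G e := by
  rw [← sub_eq_zero]
  refine (Module.forall_dual_apply_eq_zero_iff 𝕜 _).mp fun φ => ?_
  rw [map_sub, map_smul, sub_eq_zero]
  have h := (φ.compAlternatingMap G).eq_smul_basis_det e
  have h1 : φ (G (fun i => σ (e i))) = (φ.compAlternatingMap G) (σ ∘ e) := rfl
  have h2 : φ (G e) = (φ.compAlternatingMap G) e := rfl
  rw [h1, h2, h, AlternatingMap.smul_apply, AlternatingMap.smul_apply,
    Module.Basis.det_comp, Module.Basis.det_self, mul_one, smul_eq_mul, smul_eq_mul, smul_eq_mul]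
  ring

/-- Evaluation of the alternatization of the iterated-product multilinear map on a family
with pairwise anticommuting images. -/
lemma aux_alternatization_eval {A : Type*} [Ring A] [Algebra ℝ A] {k : ℕ}
    {V : Type*} [AddCommGroup V] [Module ℝ V]
    (T : V →ₗ[ℝ] A) (w : Fin k → V)
    (hw : ∀ i j, i ≠ j → T (w i) * T (w j) = -(T (w j) * T (w i))) :
    (MultilinearMap.alternatization
        ((MultilinearMap.mkPiAlgebraFin ℝ k A).compLinearMap (fun _ => T))) w
      = k.factorial • ((List.finRange k).map (fun i => T (w i))).prod := by
  rw [MultilinearMap.alternatization_apply]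
  have hterm : ∀ π : Equiv.Perm (Fin k),
      Equiv.Perm.sign π •
        ((MultilinearMap.mkPiAlgebraFin ℝ k A).compLinearMap
          (fun _ => T)).domDomCongr π w
      = ((List.finRange k).map (fun i => T (w i))).prod := by
    intro π
    have h1 : ((MultilinearMap.mkPiAlgebraFin ℝ k A).compLinearMap
        (fun _ => T)).domDomCongr π w
        = ((List.finRange k).map ((fun i => T (w i)) ∘ π)).prod := by
      simp only [MultilinearMap.domDomCongr_apply, MultilinearMap.compLinearMap_apply,
        MultilinearMap.mkPiAlgebraFin_apply, List.ofFn_eq_map]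
      rfl
    rw [h1, aux_perm π _ hw, Units.smul_def, smul_smul]
    have : ((Equiv.Perm.sign π : ℤ)) * ((Equiv.Perm.sign π : ℤ)) = 1 := by
      rw [← Units.val_mul, Int.units_mul_self, Units.val_one]
    rw [this, one_smul]
  rw [Finset.sum_congr rfl (fun π _ => hterm π), Finset.sum_const]
  simp [Fintype.card_perm]

/-- The standard positive-definite quadratic form `v ↦ ∑ i, (v i)^2` on `Fin n → ℝ`. -/
noncomputable def Qn (n : ℕ) : QuadraticForm ℝ (Fin n → ℝ) :=
  QuadraticMap.weightedSumSquares ℝ (fun _ : Fin n => (1 : ℝ))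

/-- `Spin(n)`, the spin group of the standard quadratic form on `Fin n → ℝ`. -/
abbrev Spin (n : ℕ) : Type :=
  ↥(spinGroup (Qn n))

/-- Let `n` be odd, `A ⊆ ℝⁿ` a subspace of odd dimension, `B = Aᗮ` its orthogonal
complement for the standard inner product, of even positive dimension `b`, `f` an
orthonormal basis of `B`, `z_B` the ordered product of the `ι(f i)`.  If `g ∈ Spin(n)`
stabilizes `A` and acts on `B` via the linear map `σ` (through conjugation in the Clifford
algebra), and `κ = det σ`, then `z_B·g = κ • (g·z_B)`. -/
theorem zB_conj (n : ℕ) (hn : 1 ≤ n) (hodd : Odd n)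
    (A B : Submodule ℝ (Fin n → ℝ))
    (hAodd : Odd (Module.finrank ℝ A))
    (hBperp : ∀ w : Fin n → ℝ, w ∈ B ↔ ∀ v ∈ A, (∑ i, v i * w i) = 0)
    (b : ℕ) (hb : b = Module.finrank ℝ B) (hbeven : Even b) (hbpos : 0 < b)
    (f : Fin b → (Fin n → ℝ))
    (hfB : ∀ i, f i ∈ B)
    (hforth : ∀ i j, (∑ k, f i k * f j k) = if i = j then (1 : ℝ) else 0)
    (hfspan : Submodule.span ℝ (Set.range f) = B)
    (zB : CliffordAlgebra (Qn n))
    (hzB : zB = ((List.finRange b).map (fun i => CliffordAlgebra.ι (Qn n) (f i))).prod)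
    (g : Spin n)
    (σ : B →ₗ[ℝ] B)
    (hσ : ∀ w : B,
      CliffordAlgebra.ι (Qn n) ((σ w : B) : Fin n → ℝ) =
        ((g : Spin n) : CliffordAlgebra (Qn n)) *
          CliffordAlgebra.ι (Qn n) ((w : B) : Fin n → ℝ) *
          ((g⁻¹ : Spin n) : CliffordAlgebra (Qn n)))
    (hgA : ∀ v ∈ A,
      ((g : Spin n) : CliffordAlgebra (Qn n)) * CliffordAlgebra.ι (Qn n) v *
          ((g⁻¹ : Spin n) : CliffordAlgebra (Qn n)) ∈
        A.map (CliffordAlgebra.ι (Qn n)))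
    (κ : ℝ) (hκ : κ = LinearMap.det σ) :
    zB * ((g : Spin n) : CliffordAlgebra (Qn n)) =
      κ • (((g : Spin n) : CliffordAlgebra (Qn n)) * zB) := by
  classical
  set ι' := CliffordAlgebra.ι (Qn n) with hι'
  set gg : CliffordAlgebra (Qn n) := ((g : Spin n) : CliffordAlgebra (Qn n)) with hgg
  set gi : CliffordAlgebra (Qn n) := ((g⁻¹ : Spin n) : CliffordAlgebra (Qn n)) with hgi
  have hinv : gi = star gg := rfl
  have hgig : gi * gg = 1 := by rw [hinv]; exact spinGroup.coe_star_mul_self g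
  have hggi : gg * gi = 1 := by rw [hinv]; exact spinGroup.coe_mul_star_self g
  -- quadratic form and polar form values
  have hQval : ∀ v : Fin n → ℝ, Qn n v = ∑ i, v i * v i := by
    intro v; simp [Qn, QuadraticMap.weightedSumSquares_apply]
  have hpolar : ∀ u v : Fin n → ℝ,
      QuadraticMap.polar (Qn n) u v = 2 * ∑ i, u i * v i := by
    intro u v
    simp only [QuadraticMap.polar, hQval]
    rw [← Finset.sum_sub_distrib, ← Finset.sum_sub_distrib, Finset.mul_sum]
    refine Finset.sum_congr rfl fun i _ => ?_
    simp only [Pi.add_apply]; ring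
  -- the generators
  set x : Fin b → CliffordAlgebra (Qn n) := fun i => ι' (f i) with hx
  have hxac : ∀ i j, i ≠ j → x i * x j = -(x j * x i) := by
    intro i j hij
    have h := CliffordAlgebra.ι_mul_ι_add_swap (Q := Qn n) (f i) (f j)
    rw [hpolar, hforth, if_neg hij, mul_zero, map_zero] at h
    exact eq_neg_of_add_eq_zero_left h
  have hxsq : ∀ i, x i * x i = 1 := by
    intro i
    have h := CliffordAlgebra.ι_sq_scalar (Qn n) (f i)
    rw [hQval, hforth, if_pos rfl, map_one] at h
    exact h
  -- the basis of B
  have hlif : LinearIndependent ℝ f := by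
    rw [Fintype.linearIndependent_iff]
    intro c hc j
    have hexp : ∑ k, (∑ i, c i • f i) k * f j k = c j := by
      have hco : ∀ k, (∑ i, c i • f i) k = ∑ i, c i * f i k := by
        intro k; simp [Finset.sum_apply]
      calc ∑ k, (∑ i, c i • f i) k * f j k
          = ∑ k, (∑ i, c i * f i k) * f j k := by simp only [hco]
        _ = ∑ k, ∑ i, c i * f i k * f j k := by simp only [Finset.sum_mul]
        _ = ∑ i, ∑ k, c i * f i k * f j k := Finset.sum_comm
        _ = ∑ i, c i * ∑ k, f i k * f j k := by
            refine Finset.sum_congr rfl fun i _ => ?_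
            rw [Finset.mul_sum]
            exact Finset.sum_congr rfl fun k _ => by ring
        _ = ∑ i, c i * (if i = j then (1:ℝ) else 0) := by simp only [hforth]
        _ = c j := by simp
    rw [hc] at hexp
    simpa using hexp.symm
  have hliB : LinearIndependent ℝ (fun i => (⟨f i, hfB i⟩ : B)) := by
    apply LinearIndependent.of_comp B.subtype
    exact hlif
  haveI : Nonempty (Fin b) := ⟨⟨0, hbpos⟩⟩
  set eB : Module.Basis (Fin b) ℝ B :=
    basisOfLinearIndependentOfCardEqFinrank hliB (by rw [Fintype.card_fin]; exact hb)
    with heBdef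
  have heB : ∀ i, ((eB i : B) : Fin n → ℝ) = f i := by
    intro i
    rw [heBdef, coe_basisOfLinearIndependentOfCardEqFinrank]
  -- conjugated generators
  set x' : Fin b → CliffordAlgebra (Qn n) := fun i => ι' ((σ (eB i) : B) : Fin n → ℝ) with hx'
  have hσ' : ∀ i, x' i = gg * x i * gi := by
    intro i
    have h := hσ (eB i)
    rw [heB i] at h
    exact h
  have hx'ac : ∀ i j, i ≠ j → x' i * x' j = -(x' j * x' i) := by
    intro i j hij
    have hcollapse : ∀ u v : CliffordAlgebra (Qn n), (gg * u * gi) * (gg * v * gi) = gg * (u * v) * gi := by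
      intro u v
      simp only [mul_assoc]
      rw [← mul_assoc gi gg, hgig, one_mul]
    rw [hσ' i, hσ' j, hcollapse, hcollapse, hxac i j hij]
    simp only [mul_neg, neg_mul]
  -- the two products
  set z' : CliffordAlgebra (Qn n) := ((List.finRange b).map x').prod with hz'def
  have hconj : gg * zB * gi = z' := by
    rw [hzB, aux_conj gg gi hggi hgig]
    rw [hz'def]
    refine congrArg List.prod (List.map_congr_left fun i _ => ?_)
    exact (hσ' i).symm
  -- alternating map machinery
  set T : B →ₗ[ℝ] CliffordAlgebra (Qn n) := (CliffordAlgebra.ι (Qn n)) ∘ₗ B.subtype with hT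
  have hTapp : ∀ w : B, T w = ι' ((w : B) : Fin n → ℝ) := fun w => rfl
  set G := MultilinearMap.alternatization
    ((MultilinearMap.mkPiAlgebraFin ℝ b (CliffordAlgebra (Qn n))).compLinearMap (fun _ => T)) with hGdef
  have hGe : G eB = b.factorial • zB := by
    rw [hGdef, aux_alternatization_eval T eB
      (by intro i j hij
          simp only [hTapp, heB]
          exact hxac i j hij)]
    congr 1
    rw [hzB]
    exact congrArg List.prod (List.map_congr_left fun i _ => by rw [hTapp, heB])
  have hGσ : G (fun i => σ (eB i)) = b.factorial • z' := by
    rw [hGdef, aux_alternatization_eval T (fun i => σ (eB i))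
      (by intro i j hij
          simp only [hTapp]
          exact hx'ac i j hij)]
    rfl
  have hdet := aux_alt eB G σ
  rw [hGσ, hGe, ← hκ] at hdet
  have hz'κ : z' = κ • zB := by
    have h1 : (b.factorial : ℝ) • z' = (b.factorial : ℝ) • (κ • zB) := by
      rw [Nat.cast_smul_eq_nsmul, Nat.cast_smul_eq_nsmul]
      rw [hdet, smul_comm]
    have hfac : (b.factorial : ℝ) ≠ 0 := by
      exact_mod_cast Nat.factorial_ne_zero b
    have := congrArg (fun y => (b.factorial : ℝ)⁻¹ • y) h1
    simpa [smul_smul, ← mul_assoc, inv_mul_cancel₀ hfac] using this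
  -- κ² = 1
  have hsq := aux_sq b x hxac hxsq
  have hzBz' : z' * z' = zB * zB := by
    rw [← hconj]
    have : (gg * zB * gi) * (gg * zB * gi) = gg * (zB * zB) * gi := by
      simp only [mul_assoc]
      rw [← mul_assoc gi gg, hgig, one_mul]
    rw [this]
    rcases hsq with h | h
    · rw [← hzB] at h
      rw [h, mul_one, hggi]
    · rw [← hzB] at h
      rw [h, mul_neg_one, neg_mul, hggi]
  have hκ2 : κ * κ = 1 := by
    have hz2 : z' * z' = (κ * κ) • (zB * zB) := by
      rw [hz'κ, smul_mul_assoc, mul_smul_comm, smul_smul]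
    haveI : Nontrivial (CliffordAlgebra (Qn n)) := inferInstance
    have hone : ((κ * κ) • (zB * zB) : CliffordAlgebra (Qn n)) = zB * zB := by rw [← hz2, hzBz']
    rcases hsq with h | h
    · rw [← hzB] at h; rw [h] at hone
      by_contra hne
      have hsub : (κ * κ - 1) • (1 : CliffordAlgebra (Qn n)) = 0 := by
        rw [sub_smul, one_smul, hone, sub_self]
      have : (1 : CliffordAlgebra (Qn n)) = 0 := by
        have := congrArg (fun y => (κ * κ - 1)⁻¹ • y) hsub
        simpa [smul_smul, inv_mul_cancel₀ (sub_ne_zero.2 hne)] using this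
      exact one_ne_zero this
    · rw [← hzB] at h; rw [h] at hone
      by_contra hne
      have hone' : ((κ * κ) • (1 : CliffordAlgebra (Qn n))) = 1 := by
        have := congrArg Neg.neg hone
        simpa [smul_neg] using this
      have hsub : (κ * κ - 1) • (1 : CliffordAlgebra (Qn n)) = 0 := by
        rw [sub_smul, one_smul, hone', sub_self]
      have : (1 : CliffordAlgebra (Qn n)) = 0 := by
        have := congrArg (fun y => (κ * κ - 1)⁻¹ • y) hsub
        simpa [smul_smul, inv_mul_cancel₀ (sub_ne_zero.2 hne)] using this
      exact one_ne_zero this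
  -- conclude
  have hfinal : gg * zB = κ • (zB * gg) := by
    calc gg * zB = gg * zB * (gi * gg) := by rw [hgig, mul_one]
      _ = (gg * zB * gi) * gg := by simp only [mul_assoc]
      _ = (κ • zB) * gg := by rw [hconj, hz'κ]
      _ = κ • (zB * gg) := smul_mul_assoc κ zB gg
  rw [hfinal, smul_smul, hκ2, one_smul]
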